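/- Let Σ, Σ̂ be n×n positive definite symmetric matrices with KL(Σ ‖ Σ̂) ≤ ε. Then ‖Σ − Σ̂‖_F ≤ n · λ̄ · ‖Σ̂‖_F, where λ̄ = √(12ε) if 2ε ≤ 1/24 (i.e. ε ≤ 1/48), and λ̄ = 12ε + 1/4 otherwise, is the bound on |λ_max(Σ̂^{-1/2} Σ Σ̂^{-1/2}) − 1| obtained from the KL lower bound at radius 2ε. More concretely: ‖Σ − Σ̂‖_F ≤ ‖Σ̂^{-1/2} Σ Σ̂^{-1/2} − I‖_F · ‖Σ̂‖_F. -/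

import Mathlib

open Matrix

/-- Kullback-Leibler divergence between zero-mean Gaussians with covariances `S` and `Shat`. -/
noncomputable def KL {n : ℕ} (S Shat : Matrix (Fin n) (Fin n) ℝ) : ℝ :=
  (1/2) * (-(Real.log S.det) + Real.log Shat.det + (S * Shat⁻¹).trace - n)

/-- Frobenius norm. -/
noncomputable def frobNorm {n : ℕ} (A : Matrix (Fin n) (Fin n) ℝ) : ℝ :=
  Real.sqrt ((Aᵀ * A).trace)

/-- Square root of a positive semidefinite matrix, with the definition Mathlib had in
December 2024 (since removed from Mathlib). -/
noncomputable def Matrix.PosSemidef.sqrt {n : Type*} [Fintype n] [DecidableEq n]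
    {A : Matrix n n ℝ} (hA : A.PosSemidef) : Matrix n n ℝ :=
  hA.1.eigenvectorUnitary.1 * diagonal ((↑) ∘ (√·) ∘ hA.1.eigenvalues) *
  (star hA.1.eigenvectorUnitary : Matrix n n ℝ)

lemma Matrix.PosSemidef.posSemidef_sqrt {n : Type*} [Fintype n] [DecidableEq n]
    {A : Matrix n n ℝ} (hA : A.PosSemidef) : hA.sqrt.PosSemidef := by
  unfold Matrix.PosSemidef.sqrt
  have hD : (diagonal ((↑) ∘ (√·) ∘ hA.1.eigenvalues) : Matrix n n ℝ).PosSemidef := by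
    rw [Matrix.posSemidef_diagonal_iff]
    intro i
    exact Real.sqrt_nonneg _
  have := hD.mul_mul_conjTranspose_same (hA.1.eigenvectorUnitary.1)
  simpa [Matrix.star_eq_conjTranspose] using this

lemma Matrix.PosSemidef.sqrt_mul_self {n : Type*} [Fintype n] [DecidableEq n]
    {A : Matrix n n ℝ} (hA : A.PosSemidef) : hA.sqrt * hA.sqrt = A := by
  unfold Matrix.PosSemidef.sqrt
  have hUU : (star hA.1.eigenvectorUnitary : Matrix n n ℝ) * hA.1.eigenvectorUnitary.1 = 1 :=
    Unitary.coe_star_mul_self _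
  have hDD : (diagonal ((↑) ∘ (√·) ∘ hA.1.eigenvalues) : Matrix n n ℝ) *
      diagonal ((↑) ∘ (√·) ∘ hA.1.eigenvalues) = diagonal ((↑) ∘ hA.1.eigenvalues) := by
    rw [Matrix.diagonal_mul_diagonal]
    congr 1
    funext i
    simp [Real.mul_self_sqrt (hA.eigenvalues_nonneg i)]
  have hspec := hA.1.spectral_theorem
  rw [Unitary.conjStarAlgAut_apply] at hspec
  calc _ = (hA.1.eigenvectorUnitary.1 : Matrix n n ℝ) *
        ((diagonal ((↑) ∘ (√·) ∘ hA.1.eigenvalues) : Matrix n n ℝ) *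
        ((star hA.1.eigenvectorUnitary : Matrix n n ℝ) * hA.1.eigenvectorUnitary.1) *
        diagonal ((↑) ∘ (√·) ∘ hA.1.eigenvalues)) *
        (star hA.1.eigenvectorUnitary : Matrix n n ℝ) := by simp only [Matrix.mul_assoc]
    _ = A := by rw [hUU, Matrix.mul_one, hDD]; exact hspec.symm

section Helpers

attribute [local instance] Matrix.frobeniusNormedAddCommGroup Matrix.frobeniusNormedRing

variable {n : ℕ}

private lemma trace_transpose_mul_eq (A B : Matrix (Fin n) (Fin n) ℝ) :
    (Aᵀ * B).trace = ∑ p : Fin n × Fin n, A p.1 p.2 * B p.1 p.2 := by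
  rw [Matrix.trace, Fintype.sum_prod_type]
  simp only [Matrix.diag_apply, Matrix.mul_apply, Matrix.transpose_apply]
  exact Finset.sum_comm


private lemma norm_eq_sqrt_sum (A : Matrix (Fin n) (Fin n) ℝ) :
    ‖A‖ = Real.sqrt (∑ p : Fin n × Fin n, (A p.1 p.2)^2) := by
  rw [Matrix.frobenius_norm_def, Real.sqrt_eq_rpow, Fintype.sum_prod_type]
  congr 1
  simp [Real.rpow_two, sq_abs]

private lemma frobNorm_eq_norm (A : Matrix (Fin n) (Fin n) ℝ) : frobNorm A = ‖A‖ := by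
  rw [frobNorm, trace_transpose_mul_eq, norm_eq_sqrt_sum]
  congr 1
  exact Finset.sum_congr rfl fun p _ => (sq (A p.1 p.2)).symm

lemma frobNorm_nonneg (A : Matrix (Fin n) (Fin n) ℝ) : 0 ≤ frobNorm A :=
  Real.sqrt_nonneg _

lemma frobNorm_mul_le (A B : Matrix (Fin n) (Fin n) ℝ) :
    frobNorm (A * B) ≤ frobNorm A * frobNorm B := by
  rw [frobNorm_eq_norm, frobNorm_eq_norm, frobNorm_eq_norm]
  exact Matrix.frobenius_norm_mul A B

lemma trace_transpose_mul_le (X Y : Matrix (Fin n) (Fin n) ℝ) :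
    (Xᵀ * Y).trace ≤ frobNorm X * frobNorm Y := by
  rw [trace_transpose_mul_eq, frobNorm_eq_norm, frobNorm_eq_norm, norm_eq_sqrt_sum,
    norm_eq_sqrt_sum]
  exact Real.sum_mul_le_sqrt_mul_sqrt _ _ _

end Helpers

private lemma nonneg_term {x : ℝ} (hx : 0 < x) : 0 ≤ x - 1 - Real.log x := by
  nlinarith [Real.log_le_sub_one_of_pos hx]

private lemma abs_sub_one_le {x δ : ℝ} (hx : 0 < x) (hδ : 0 ≤ δ)
    (h : x - 1 - Real.log x ≤ δ) : |x - 1| ≤ 2 * Real.sqrt δ + δ := by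
  have hsx : 0 < Real.sqrt x := Real.sqrt_pos.2 hx
  have hxx : Real.sqrt x ^ 2 = x := Real.sq_sqrt hx.le
  have hlog : Real.log x = 2 * Real.log (Real.sqrt x) := by
    conv_lhs => rw [← hxx]
    rw [Real.log_pow]; push_cast; ring
  have h1 : Real.log (Real.sqrt x) ≤ Real.sqrt x - 1 := Real.log_le_sub_one_of_pos hsx
  have key : (Real.sqrt x - 1) ^ 2 ≤ δ := by nlinarith
  have h2 : |Real.sqrt x - 1| ≤ Real.sqrt δ := by
    rw [← Real.sqrt_sq_eq_abs]; exact Real.sqrt_le_sqrt key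
  have hd : Real.sqrt δ ^ 2 = δ := Real.sq_sqrt hδ
  have h3 := abs_le.mp h2
  have hd0 : 0 ≤ Real.sqrt δ := Real.sqrt_nonneg δ
  rw [abs_le]
  constructor <;> nlinarith [hsx.le, h3.1, h3.2]

private lemma bound_case1 {ε : ℝ} (hε : 0 ≤ ε) (h : ε ≤ 1/48) :
    2 * Real.sqrt (2*ε) + 2*ε ≤ Real.sqrt (12*ε) := by
  have h6 : Real.sqrt (12*ε) = Real.sqrt 6 * Real.sqrt (2*ε) := by
    rw [← Real.sqrt_mul (by norm_num : (0:ℝ) ≤ 6)]; ring_nf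
  set a := Real.sqrt (2*ε) with ha
  have ha0 : 0 ≤ a := Real.sqrt_nonneg _
  have ha2 : a ^ 2 = 2*ε := Real.sq_sqrt (by linarith)
  have h6a : Real.sqrt 6 ^ 2 = 6 := Real.sq_sqrt (by norm_num)
  have h60 : 0 ≤ Real.sqrt 6 := Real.sqrt_nonneg _
  have hs6 : (12:ℝ)/5 ≤ Real.sqrt 6 := by nlinarith
  have haq : a ≤ 1/4 := by nlinarith
  rw [h6]
  nlinarith

private lemma bound_case2 {ε : ℝ} (hε : 0 ≤ ε) :
    2 * Real.sqrt (2*ε) + 2*ε ≤ 12*ε + 1/4 := by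
  set a := Real.sqrt (2*ε) with ha
  have ha0 : 0 ≤ a := Real.sqrt_nonneg _
  have ha2 : a ^ 2 = 2*ε := Real.sq_sqrt (by linarith)
  nlinarith [sq_nonneg (a - 1/5)]

open scoped Classical in
theorem stmt_12 {n : ℕ} (ε : ℝ) (hε : 0 ≤ ε) (S Shat : Matrix (Fin n) (Fin n) ℝ)
    (hS : S.PosDef) (hShat : Shat.PosDef)
    (hKL : KL S Shat ≤ ε)
    (lam : ℝ) (hlam : lam = if ε ≤ 1/48 then Real.sqrt (12 * ε) else 12 * ε + 1/4) :
    frobNorm (S - Shat)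
        ≤ frobNorm ((hShat.posSemidef.sqrt)⁻¹ * S * (hShat.posSemidef.sqrt)⁻¹ - 1)
            * frobNorm Shat ∧
    frobNorm (S - Shat) ≤ n * lam * frobNorm Shat := by
  set R := hShat.posSemidef.sqrt with hRdef
  have hRps : R.PosSemidef := hShat.posSemidef.posSemidef_sqrt
  have hRT : Rᵀ = R := by
    rw [← Matrix.conjTranspose_eq_transpose_of_trivial]; exact hRps.isHermitian
  have hRR : R * R = Shat := hShat.posSemidef.sqrt_mul_self
  have hShatT : Shatᵀ = Shat := by
    rw [← Matrix.conjTranspose_eq_transpose_of_trivial]; exact hShat.isHermitian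
  have hdetShat : 0 < Shat.det := hShat.det_pos
  have hdetR : R.det ≠ 0 := by
    intro h
    have : Shat.det = 0 := by rw [← hRR, Matrix.det_mul, h, zero_mul]
    exact hdetShat.ne' this
  have hRu : IsUnit R.det := isUnit_iff_ne_zero.2 hdetR
  have hRinv : R * R⁻¹ = 1 := Matrix.mul_nonsing_inv R hRu
  have hRinv' : R⁻¹ * R = 1 := Matrix.nonsing_inv_mul R hRu
  set M := R⁻¹ * S * R⁻¹ with hMdef
  have hRiT : (R⁻¹)ᵀ = R⁻¹ := by rw [Matrix.transpose_nonsing_inv, hRT]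
  have hMps : M.PosSemidef := by
    have := hS.posSemidef.mul_mul_conjTranspose_same (R⁻¹)
    rwa [Matrix.conjTranspose_eq_transpose_of_trivial, hRiT] at this
  have hMH : M.IsHermitian := hMps.isHermitian
  have hSRMR : S = R * M * R := by
    have h1 : R * M * R = (R * R⁻¹) * S * (R⁻¹ * R) := by
      simp only [hMdef, Matrix.mul_assoc]
    rw [h1, hRinv, hRinv', Matrix.one_mul, Matrix.mul_one]
  have hdetS : S.det = Shat.det * M.det := by
    rw [hSRMR, ← hRR]
    simp only [Matrix.det_mul]
    ring
  have hdetM : 0 < M.det := by nlinarith [hS.det_pos, hdetShat, hdetS]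
  set μ := hMH.eigenvalues with hμdef
  have hdetM_eq : M.det = ∏ i, μ i := by simpa using hMH.det_eq_prod_eigenvalues
  have hμ0 : ∀ i, 0 ≤ μ i := hMps.eigenvalues_nonneg
  have hμpos : ∀ i, 0 < μ i := by
    intro i
    rcases (hμ0 i).eq_or_lt with h | h
    · exfalso
      have : M.det = 0 := by
        rw [hdetM_eq]; exact Finset.prod_eq_zero (Finset.mem_univ i) h.symm
      linarith
    · exact h
  set U : Matrix (Fin n) (Fin n) ℝ := (hMH.eigenvectorUnitary : Matrix (Fin n) (Fin n) ℝ) with hUdef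
  have hUU : star U * U = 1 := Matrix.mem_unitaryGroup_iff'.mp hMH.eigenvectorUnitary.2
  have hUU' : U * star U = 1 := Matrix.mem_unitaryGroup_iff.mp hMH.eigenvectorUnitary.2
  have hspec : M = U * diagonal μ * star U := by simpa using hMH.spectral_theorem
  have trace_conj : ∀ X : Matrix (Fin n) (Fin n) ℝ, (U * X * star U).trace = X.trace := by
    intro X
    rw [Matrix.trace_mul_comm (U * X) (star U), ← Matrix.mul_assoc, hUU, Matrix.one_mul]
  have htrM : M.trace = ∑ i, μ i := by
    rw [hspec, trace_conj, Matrix.trace_diagonal]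
  -- KL as a sum over eigenvalues
  have hShatInv : Shat⁻¹ = R⁻¹ * R⁻¹ := by rw [← hRR, Matrix.mul_inv_rev]
  have htrS : (S * Shat⁻¹).trace = M.trace := by
    rw [hShatInv, hSRMR]
    have h2 : (R * M * R) * (R⁻¹ * R⁻¹) = R * M * R⁻¹ := by
      rw [Matrix.mul_assoc (R * M) R (R⁻¹ * R⁻¹), ← Matrix.mul_assoc R R⁻¹ R⁻¹, hRinv,
        Matrix.one_mul]
    rw [h2, Matrix.trace_mul_cycle, ← Matrix.mul_assoc, hRinv', Matrix.one_mul]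
  have hlogdet : Real.log S.det = Real.log Shat.det + ∑ i, Real.log (μ i) := by
    rw [hdetS, Real.log_mul hdetShat.ne' hdetM.ne', hdetM_eq,
      Real.log_prod (fun i _ => (hμpos i).ne')]
  have hKLsum : KL S Shat = (1/2) * ∑ i, (μ i - 1 - Real.log (μ i)) := by
    have hsum : ∑ i, (μ i - 1 - Real.log (μ i))
        = (∑ i, μ i) - n - ∑ i, Real.log (μ i) := by
      rw [Finset.sum_sub_distrib, Finset.sum_sub_distrib]
      simp [Finset.card_univ]
    rw [KL, hlogdet, htrS, htrM, hsum]
    ring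
  have hterm : ∀ i, μ i - 1 - Real.log (μ i) ≤ 2 * ε := by
    intro i
    have hsum : ∑ i, (μ i - 1 - Real.log (μ i)) ≤ 2 * ε := by
      rw [hKLsum] at hKL; linarith
    have hle := Finset.single_le_sum
      (f := fun i => μ i - 1 - Real.log (μ i))
      (fun j _ => nonneg_term (hμpos j)) (Finset.mem_univ i)
    exact le_trans (by simpa using hle) hsum
  have hlam0 : 0 ≤ lam := by
    rw [hlam]; split
    · exact Real.sqrt_nonneg _
    · linarith
  have habs : ∀ i, |μ i - 1| ≤ lam := by
    intro i
    have h1 : |μ i - 1| ≤ 2 * Real.sqrt (2*ε) + 2*ε :=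
      abs_sub_one_le (hμpos i) (by linarith) (hterm i)
    rw [hlam]
    split_ifs with hcase
    · exact h1.trans (bound_case1 hε hcase)
    · exact h1.trans (bound_case2 hε)
  -- Frobenius norm of M - 1
  set B := M - 1 with hBdef
  have hBH : B.IsHermitian := hMH.sub Matrix.isHermitian_one
  have hBT : Bᵀ = B := by
    rw [← Matrix.conjTranspose_eq_transpose_of_trivial]; exact hBH
  have hBspec : B = U * diagonal (fun i => μ i - 1) * star U := by
    have hd : diagonal (fun i => μ i - 1) = diagonal μ - 1 := by
      rw [← Matrix.diagonal_one, Matrix.diagonal_sub]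
    rw [hBdef, hd, Matrix.mul_sub, Matrix.sub_mul, Matrix.mul_one, hUU', ← hspec]
  have htrB2 : (Bᵀ * B).trace = ∑ i, (μ i - 1)^2 := by
    rw [hBT]
    have hmm : B * B = U * (diagonal (fun i => μ i - 1) * diagonal (fun i => μ i - 1))
        * star U := by
      rw [hBspec]
      have hmid : star U * (U * (diagonal (fun i => μ i - 1) * star U))
          = diagonal (fun i => μ i - 1) * star U := by
        rw [← Matrix.mul_assoc, hUU, Matrix.one_mul]
      simp only [Matrix.mul_assoc, hmid]
    rw [hmm, trace_conj, Matrix.diagonal_mul_diagonal, Matrix.trace_diagonal]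
    exact Finset.sum_congr rfl fun i _ => (sq (μ i - 1)).symm
  have hfrobB : frobNorm B ≤ n * lam := by
    have hsum_le : ∑ i, (μ i - 1)^2 ≤ n * lam^2 := by
      calc ∑ i, (μ i - 1)^2 ≤ ∑ _i : Fin n, lam^2 := by
            refine Finset.sum_le_sum fun i _ => ?_
            have := habs i
            nlinarith [abs_nonneg (μ i - 1), sq_abs (μ i - 1)]
        _ = n * lam^2 := by simp [Finset.card_univ]
    have hsqn : Real.sqrt (n : ℝ) ≤ (n : ℝ) := by
      rcases Nat.eq_zero_or_pos n with h | h
      · simp [h]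
      · have h1 : (1:ℝ) ≤ (n:ℝ) := by exact_mod_cast h
        have : (n:ℝ) ≤ (n:ℝ)^2 := by nlinarith
        calc Real.sqrt (n:ℝ) ≤ Real.sqrt ((n:ℝ)^2) := Real.sqrt_le_sqrt this
          _ = (n:ℝ) := Real.sqrt_sq (by linarith)
    calc frobNorm B = Real.sqrt ((Bᵀ * B).trace) := rfl
      _ ≤ Real.sqrt ((n : ℝ) * lam^2) := by
          rw [htrB2]; exact Real.sqrt_le_sqrt hsum_le
      _ = Real.sqrt (n : ℝ) * lam := by
          rw [Real.sqrt_mul (by positivity), Real.sqrt_sq hlam0]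
      _ ≤ n * lam := mul_le_mul_of_nonneg_right hsqn hlam0
  -- Part 1
  have hSsub : S - Shat = R * B * R := by
    have h1 : R * B * R = R * M * R - R * 1 * R := by
      rw [hBdef, Matrix.mul_sub, Matrix.sub_mul]
    rw [h1, ← hSRMR, Matrix.mul_one, hRR]
  have hpart1 : frobNorm (S - Shat) ≤ frobNorm B * frobNorm Shat := by
    have ht : (R * B * R)ᵀ = R * B * R := by
      simp [Matrix.transpose_mul, hRT, hBT, Matrix.mul_assoc]
    have ht2 : (Shat * B)ᵀ = B * Shat := by
      rw [Matrix.transpose_mul, hBT, hShatT]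
    have key : ((R * B * R)ᵀ * (R * B * R)).trace = ((Shat * B)ᵀ * (B * Shat)).trace := by
      rw [ht, ht2]
      rw [show (R * B * R) * (R * B * R) = R * ((B * R * R * B) * R) from by
        simp only [Matrix.mul_assoc], Matrix.trace_mul_comm]
      rw [← hRR]
      simp only [Matrix.mul_assoc]
    have hbound : ((Shat * B)ᵀ * (B * Shat)).trace
        ≤ (frobNorm B * frobNorm Shat) ^ 2 := by
      calc ((Shat * B)ᵀ * (B * Shat)).trace
          ≤ frobNorm (Shat * B) * frobNorm (B * Shat) := trace_transpose_mul_le _ _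
        _ ≤ (frobNorm Shat * frobNorm B) * (frobNorm B * frobNorm Shat) := by
            exact mul_le_mul (frobNorm_mul_le _ _) (frobNorm_mul_le _ _)
              (frobNorm_nonneg _) (mul_nonneg (frobNorm_nonneg _) (frobNorm_nonneg _))
        _ = (frobNorm B * frobNorm Shat) ^ 2 := by ring
    calc frobNorm (S - Shat) = Real.sqrt (((R * B * R)ᵀ * (R * B * R)).trace) := by
          rw [hSsub]; rfl
      _ ≤ Real.sqrt ((frobNorm B * frobNorm Shat) ^ 2) := by
          rw [key]; exact Real.sqrt_le_sqrt hbound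
      _ = frobNorm B * frobNorm Shat :=
          Real.sqrt_sq (mul_nonneg (frobNorm_nonneg _) (frobNorm_nonneg _))
  refine ⟨hpart1, ?_⟩
  calc frobNorm (S - Shat) ≤ frobNorm B * frobNorm Shat := hpart1
    _ ≤ (n * lam) * frobNorm Shat :=
        mul_le_mul_of_nonneg_right hfrobB (frobNorm_nonneg _)
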